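/- arXiv:1710.03442 — 2 statements merged into one kernel-verified Lean document; each statement's English description precedes it below -/
import Mathlib

section
/- Let S and A be nonempty finite types, γ ∈ (0,1), P a row-stochastic matrix of size |S×A|×|S|, and ρ₀ ∈ ℝ^S a vector with nonnegative entries summing to 1. Let Π^{π'}, Π^π, Π^β be row-stochastic matrices of size |S|×|S×A| and set P^{π'} = Π^{π'}P, P^π = Π^πP, P^β = Π^βP, and define row vectors ρ^{π'}ᵀ = ρ₀ᵀ(I − γP^{π'})⁻¹, ρ^πᵀ = ρ₀ᵀ(I − γP^π)⁻¹, ρ^βᵀ = ρ₀ᵀ(I − γP^β)⁻¹. Then for every α ∈ [0,1], ‖ρ^{π'} − (α ρ^π + (1−α) ρ^β)‖₁ ≤ (γ/(1−γ)²) · (α ‖Π^{π'} − Π^π‖∞ + (1−α) ‖Π^{π'} − Π^β‖∞). -/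
open Matrix BigOperators

/-- A matrix is row-stochastic if all entries are nonnegative and every row sums to 1. -/
def IsStochastic {m n : Type*} [Fintype m] [Fintype n] (M : Matrix m n ℝ) : Prop :=
  (∀ i j, 0 ≤ M i j) ∧ ∀ i, ∑ j, M i j = 1

/-- `‖x‖₁`: the sum of the absolute values of the entries of a vector. -/
noncomputable def norm1 {n : Type*} [Fintype n] (x : n → ℝ) : ℝ := ∑ i, |x i|

/-- `‖M‖∞`: the maximum over rows of the sum of absolute values of the entries. -/
noncomputable def normInfM {m n : Type*} [Fintype m] [Fintype n] (M : Matrix m n ℝ) : ℝ :=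
  ⨆ i, ∑ j, |M i j|

section Aux
variable {S : Type*} [Fintype S] [DecidableEq S]

lemma norm1_nonneg {n : Type*} [Fintype n] (x : n → ℝ) : 0 ≤ norm1 x :=
  Finset.sum_nonneg fun _ _ => abs_nonneg _

lemma rowsum_le_normInf {m n : Type*} [Fintype m] [Fintype n] (M : Matrix m n ℝ) (i : m) :
    ∑ j, |M i j| ≤ normInfM M := by
  unfold normInfM
  exact le_ciSup (f := fun i => ∑ j, |M i j|) (Set.Finite.bddAbove (Set.finite_range _)) i

lemma normInf_nonneg {m n : Type*} [Fintype m] [Fintype n] [Nonempty m] (M : Matrix m n ℝ) :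
    0 ≤ normInfM M :=
  le_trans (Finset.sum_nonneg fun _ _ => abs_nonneg _) (rowsum_le_normInf M (Classical.arbitrary m))

lemma norm1_vecMul_le {n m : Type*} [Fintype n] [Fintype m]
    (x : n → ℝ) (M : Matrix n m ℝ) :
    norm1 (x ᵥ* M) ≤ norm1 x * normInfM M := by
  calc norm1 (x ᵥ* M) = ∑ j, |∑ i, x i * M i j| := by
        simp [norm1, vecMul, dotProduct]
    _ ≤ ∑ j, ∑ i, |x i| * |M i j| := by
        refine Finset.sum_le_sum fun j _ => ?_
        exact (Finset.abs_sum_le_sum_abs _ _).trans (le_of_eq (by simp [abs_mul]))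
    _ = ∑ i, |x i| * ∑ j, |M i j| := by
        rw [Finset.sum_comm]; simp [Finset.mul_sum]
    _ ≤ ∑ i, |x i| * normInfM M := by
        refine Finset.sum_le_sum fun i _ => ?_
        exact mul_le_mul_of_nonneg_left (rowsum_le_normInf M i) (abs_nonneg _)
    _ = norm1 x * normInfM M := by rw [norm1, Finset.sum_mul]

lemma norm1_vecMul_stoch_le {n m : Type*} [Fintype n] [Fintype m]
    (x : n → ℝ) (M : Matrix n m ℝ) (hM : IsStochastic M) :
    norm1 (x ᵥ* M) ≤ norm1 x := by
  calc norm1 (x ᵥ* M) = ∑ j, |∑ i, x i * M i j| := by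
        simp [norm1, vecMul, dotProduct]
    _ ≤ ∑ j, ∑ i, |x i| * M i j := by
        refine Finset.sum_le_sum fun j _ => ?_
        refine (Finset.abs_sum_le_sum_abs _ _).trans (le_of_eq ?_)
        refine Finset.sum_congr rfl fun i _ => ?_
        rw [abs_mul, abs_of_nonneg (hM.1 i j)]
    _ = ∑ i, |x i| * ∑ j, M i j := by
        rw [Finset.sum_comm]; simp [Finset.mul_sum]
    _ = norm1 x := by simp [norm1, hM.2]

lemma normInf_mul_stoch_le {l n m : Type*} [Fintype l] [Fintype n] [Fintype m]
    (D : Matrix l n ℝ) (M : Matrix n m ℝ) (hM : IsStochastic M) :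
    normInfM (D * M) ≤ normInfM D := by
  cases isEmpty_or_nonempty l
  · simp [normInfM, ciSup_of_empty]
  refine ciSup_le fun i => ?_
  calc ∑ j, |(D * M) i j| = norm1 ((fun k => D i k) ᵥ* M) := by
        simp [norm1, Matrix.mul_apply, vecMul, dotProduct]
    _ ≤ norm1 (fun k => D i k) := norm1_vecMul_stoch_le _ _ hM
    _ ≤ normInfM D := rowsum_le_normInf D i

lemma norm1_smuladd_le {n : Type*} [Fintype n] (γ : ℝ) (hγ : 0 ≤ γ) (x y : n → ℝ) :
    norm1 (x + γ • y) ≤ norm1 x + γ * norm1 y := by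
  calc norm1 (x + γ • y) = ∑ i, |x i + γ * y i| := rfl
    _ ≤ ∑ i, (|x i| + γ * |y i|) := by
        refine Finset.sum_le_sum fun i _ => ?_
        calc |x i + γ * y i| ≤ |x i| + |γ * y i| := abs_add_le _ _
          _ = |x i| + γ * |y i| := by rw [abs_mul, abs_of_nonneg hγ]
    _ = norm1 x + γ * norm1 y := by
        rw [Finset.sum_add_distrib, ← Finset.mul_sum]; rfl

lemma vecMul_smul_right {n m : Type*} [Fintype n] [Fintype m] (γ : ℝ) (x : n → ℝ)
    (M : Matrix n m ℝ) : x ᵥ* (γ • M) = γ • (x ᵥ* M) := by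
  funext j
  simp only [vecMul, dotProduct, Pi.smul_apply, Matrix.smul_apply, smul_eq_mul, Finset.mul_sum]
  exact Finset.sum_congr rfl fun i _ => by ring

lemma det_ne_zero_aux (γ : ℝ) (hγ : γ ∈ Set.Ioo (0:ℝ) 1) (Q : Matrix S S ℝ)
    (hQ : IsStochastic Q) : (1 - γ • Q).det ≠ 0 := by
  refine det_ne_zero_of_sum_row_lt_diag (fun k => ?_)
  have hQkk : Q k k ≤ 1 := by
    have h := hQ.2 k
    calc Q k k ≤ ∑ j, Q k j := Finset.single_le_sum (fun j _ => hQ.1 k j) (Finset.mem_univ k)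
    _ = 1 := h
  have h1 : ∀ j, j ≠ k → (1 - γ • Q) k j = -(γ * Q k j) := by
    intro j hj
    simp [Matrix.sub_apply, Matrix.one_apply, Ne.symm hj]
  have hdiag : (1 - γ • Q) k k = 1 - γ * Q k k := by
    simp [Matrix.sub_apply, Matrix.one_apply]
  have hsum : ∑ j ∈ Finset.univ.erase k, ‖(1 - γ • Q) k j‖
      = γ * ∑ j ∈ Finset.univ.erase k, Q k j := by
    rw [Finset.mul_sum]
    refine Finset.sum_congr rfl fun j hj => ?_
    rw [h1 j (Finset.mem_erase.mp hj).1]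
    rw [Real.norm_eq_abs, abs_neg, abs_of_nonneg (mul_nonneg hγ.1.le (hQ.1 k j))]
  have herase : ∑ j ∈ Finset.univ.erase k, Q k j = 1 - Q k k := by
    have h := Finset.add_sum_erase Finset.univ (Q k) (Finset.mem_univ k)
    rw [hQ.2 k] at h; linarith
  rw [hsum, herase, hdiag, Real.norm_eq_abs,
    abs_of_pos (by nlinarith [hγ.1, hγ.2, hQ.1 k k] : (0:ℝ) < 1 - γ * Q k k)]
  nlinarith [hγ.2, hQ.1 k k, hQkk]

lemma fixed_point (γ : ℝ) (hγ : γ ∈ Set.Ioo (0:ℝ) 1) (Q : Matrix S S ℝ)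
    (hQ : IsStochastic Q) (ρ₀ : S → ℝ) :
    ρ₀ ᵥ* (1 - γ • Q)⁻¹ = ρ₀ + γ • ((ρ₀ ᵥ* (1 - γ • Q)⁻¹) ᵥ* Q) := by
  set ρ := ρ₀ ᵥ* (1 - γ • Q)⁻¹ with hρ
  have h : ρ ᵥ* (1 - γ • Q) = ρ₀ := by
    rw [hρ, Matrix.vecMul_vecMul,
      Matrix.nonsing_inv_mul _ (isUnit_iff_ne_zero.2 (det_ne_zero_aux γ hγ Q hQ)),
      Matrix.vecMul_one]
  have h2 : ρ ᵥ* (1 - γ • Q) = ρ - γ • (ρ ᵥ* Q) := by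
    rw [Matrix.vecMul_sub, Matrix.vecMul_one, vecMul_smul_right]
  rw [h2] at h
  have h3 : ρ = ρ₀ + γ • (ρ ᵥ* Q) := by rw [← h]; abel
  exact h3

lemma norm1_rho_le (γ : ℝ) (hγ : γ ∈ Set.Ioo (0:ℝ) 1) (Q : Matrix S S ℝ)
    (hQ : IsStochastic Q) (ρ₀ : S → ℝ) (hρ₀pos : ∀ s, 0 ≤ ρ₀ s) (hρ₀sum : ∑ s, ρ₀ s = 1) :
    norm1 (ρ₀ ᵥ* (1 - γ • Q)⁻¹) ≤ 1 / (1 - γ) := by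
  set ρ := ρ₀ ᵥ* (1 - γ • Q)⁻¹ with hρ
  have hfix : ρ = ρ₀ + γ • (ρ ᵥ* Q) := fixed_point γ hγ Q hQ ρ₀
  have h0 : norm1 ρ₀ = 1 := by
    rw [norm1, ← hρ₀sum]
    exact Finset.sum_congr rfl fun s _ => abs_of_nonneg (hρ₀pos s)
  have h1 : norm1 ρ ≤ 1 + γ * norm1 ρ := by
    calc norm1 ρ = norm1 (ρ₀ + γ • (ρ ᵥ* Q)) := by rw [← hfix]
      _ ≤ norm1 ρ₀ + γ * norm1 (ρ ᵥ* Q) := norm1_smuladd_le γ hγ.1.le _ _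
      _ ≤ 1 + γ * norm1 ρ := by
          rw [h0]
          exact add_le_add_right (mul_le_mul_of_nonneg_left
            (norm1_vecMul_stoch_le ρ Q hQ) hγ.1.le) 1
  have hγ1 : 0 < 1 - γ := by linarith [hγ.2]
  rw [le_div_iff₀ hγ1]
  nlinarith

lemma diff_bound (γ : ℝ) (hγ : γ ∈ Set.Ioo (0:ℝ) 1) (Q1 Q2 : Matrix S S ℝ)
    (hQ1 : IsStochastic Q1) (hQ2 : IsStochastic Q2)
    (ρ₀ : S → ℝ) (hρ₀pos : ∀ s, 0 ≤ ρ₀ s) (hρ₀sum : ∑ s, ρ₀ s = 1) :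
    norm1 (ρ₀ ᵥ* (1 - γ • Q1)⁻¹ - ρ₀ ᵥ* (1 - γ • Q2)⁻¹) ≤
      γ / (1 - γ) ^ 2 * normInfM (Q1 - Q2) := by
  cases isEmpty_or_nonempty S
  · simp [norm1, normInfM]
  set ρ1 := ρ₀ ᵥ* (1 - γ • Q1)⁻¹ with hρ1
  set ρ2 := ρ₀ ᵥ* (1 - γ • Q2)⁻¹ with hρ2
  have hfix1 : ρ1 = ρ₀ + γ • (ρ1 ᵥ* Q1) := fixed_point γ hγ Q1 hQ1 ρ₀
  have hfix2 : ρ2 = ρ₀ + γ • (ρ2 ᵥ* Q2) := fixed_point γ hγ Q2 hQ2 ρ₀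
  set d := ρ1 - ρ2 with hd
  set N := normInfM (Q1 - Q2) with hN
  have hkey : d = γ • (ρ1 ᵥ* (Q1 - Q2)) + γ • (d ᵥ* Q2) := by
    have e1 : ρ1 ᵥ* (Q1 - Q2) = ρ1 ᵥ* Q1 - ρ1 ᵥ* Q2 := Matrix.vecMul_sub _ _ _
    have e2 : d ᵥ* Q2 = ρ1 ᵥ* Q2 - ρ2 ᵥ* Q2 := by rw [hd]; exact Matrix.sub_vecMul _ _ _
    calc d = (ρ₀ + γ • (ρ1 ᵥ* Q1)) - (ρ₀ + γ • (ρ2 ᵥ* Q2)) := by rw [hd, ← hfix1, ← hfix2]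
      _ = γ • (ρ1 ᵥ* Q1) - γ • (ρ2 ᵥ* Q2) := by abel
      _ = γ • (ρ1 ᵥ* (Q1 - Q2)) + γ • (d ᵥ* Q2) := by
          rw [e1, e2, smul_sub, smul_sub]; abel
  have hγ1 : 0 < 1 - γ := by linarith [hγ.2]
  have hnorm1 : norm1 d ≤ γ * (norm1 ρ1 * N) + γ * norm1 d := by
    calc norm1 d = norm1 ((γ • (ρ1 ᵥ* (Q1 - Q2))) + γ • (d ᵥ* Q2)) := by rw [← hkey]
      _ ≤ norm1 (γ • (ρ1 ᵥ* (Q1 - Q2))) + γ * norm1 (d ᵥ* Q2) := by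
          have := norm1_smuladd_le γ hγ.1.le (γ • (ρ1 ᵥ* (Q1 - Q2))) (d ᵥ* Q2)
          exact this
      _ ≤ γ * (norm1 ρ1 * N) + γ * norm1 d := by
          refine add_le_add ?_ ?_
          · have hs : norm1 (γ • (ρ1 ᵥ* (Q1 - Q2))) = γ * norm1 (ρ1 ᵥ* (Q1 - Q2)) := by
              rw [norm1, norm1, Finset.mul_sum]
              refine Finset.sum_congr rfl fun i _ => ?_
              simp [abs_mul, abs_of_pos hγ.1]
            rw [hs, hN]
            exact mul_le_mul_of_nonneg_left (norm1_vecMul_le ρ1 (Q1 - Q2)) hγ.1.le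
          · exact mul_le_mul_of_nonneg_left (norm1_vecMul_stoch_le d Q2 hQ2) hγ.1.le
  have hρ1n : norm1 ρ1 ≤ 1 / (1 - γ) := norm1_rho_le γ hγ Q1 hQ1 ρ₀ hρ₀pos hρ₀sum
  have hQn : 0 ≤ N := normInf_nonneg _
  have this1 : norm1 ρ1 * N ≤ 1 / (1 - γ) * N := mul_le_mul_of_nonneg_right hρ1n hQn
  have h2 : (1 - γ) * norm1 d ≤ γ * (1 / (1 - γ) * N) := by
    have h3 := mul_le_mul_of_nonneg_left this1 hγ.1.le
    calc (1 - γ) * norm1 d = norm1 d - γ * norm1 d := by ring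
      _ ≤ γ * (norm1 ρ1 * N) := by linarith
      _ ≤ γ * (1 / (1 - γ) * N) := h3
  rw [div_mul_eq_mul_div, le_div_iff₀ (by positivity : (0:ℝ) < (1 - γ) ^ 2)]
  have h4 := mul_le_mul_of_nonneg_left h2 hγ1.le
  have hne : (1 - γ) ≠ 0 := hγ1.ne'
  calc norm1 d * (1 - γ) ^ 2 = (1 - γ) * ((1 - γ) * norm1 d) := by ring
    _ ≤ (1 - γ) * (γ * (1 / (1 - γ) * N)) := h4
    _ = γ * N := by field_simp
end Aux

lemma isStochastic_mul {l n m : Type*} [Fintype l] [Fintype n] [Fintype m]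
    (M : Matrix l n ℝ) (N : Matrix n m ℝ) (hM : IsStochastic M) (hN : IsStochastic N) :
    IsStochastic (M * N) := by
  constructor
  · intro i j
    exact Finset.sum_nonneg fun k _ => mul_nonneg (hM.1 i k) (hN.1 k j)
  · intro i
    rw [show ∑ j, (M * N) i j = ∑ j, ∑ k, M i k * N k j from
      Finset.sum_congr rfl fun j _ => rfl, Finset.sum_comm]
    calc ∑ k, ∑ j, M i k * N k j = ∑ k, M i k * ∑ j, N k j := by
          simp [Finset.mul_sum]
      _ = 1 := by simp only [hN.2, mul_one]; exact hM.2 i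

lemma norm1_convex_le {n : Type*} [Fintype n] (a b : ℝ) (ha : 0 ≤ a) (hb : 0 ≤ b)
    (x y : n → ℝ) : norm1 (a • x + b • y) ≤ a * norm1 x + b * norm1 y := by
  calc norm1 (a • x + b • y) = ∑ i, |a * x i + b * y i| := rfl
    _ ≤ ∑ i, (a * |x i| + b * |y i|) := by
        refine Finset.sum_le_sum fun i _ => ?_
        calc |a * x i + b * y i| ≤ |a * x i| + |b * y i| := abs_add_le _ _
          _ = a * |x i| + b * |y i| := by
              rw [abs_mul, abs_mul, abs_of_nonneg ha, abs_of_nonneg hb]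
    _ = a * norm1 x + b * norm1 y := by
        rw [Finset.sum_add_distrib, ← Finset.mul_sum, ← Finset.mul_sum]; rfl

/-- Corollary 1, model-free bound. `polπ'`, `polπ`, `polβ` are the policy
matrices `Π^{π'}, Π^π, Π^β`:
`‖ρ^{π'} − (α ρ^π + (1−α) ρ^β)‖₁
  ≤ (γ/(1−γ)²) (α ‖Π^{π'} − Π^π‖∞ + (1−α) ‖Π^{π'} − Π^β‖∞)`. -/
theorem model_free_bound_of_mixture_state_distributions
    {S A : Type*} [Fintype S] [Fintype A] [Nonempty S] [Nonempty A] [DecidableEq S]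
    (γ : ℝ) (hγ : γ ∈ Set.Ioo (0 : ℝ) 1)
    (P : Matrix (S × A) S ℝ) (hP : IsStochastic P)
    (polπ' polπ polβ : Matrix S (S × A) ℝ)
    (hpolπ' : IsStochastic polπ') (hpolπ : IsStochastic polπ) (hpolβ : IsStochastic polβ)
    (ρ₀ : S → ℝ) (hρ₀pos : ∀ s, 0 ≤ ρ₀ s) (hρ₀sum : ∑ s, ρ₀ s = 1)
    (α : ℝ) (hα : α ∈ Set.Icc (0 : ℝ) 1) :
    let Pπ' := polπ' * P
    let Pπ := polπ * P
    let Pβ := polβ * P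
    let ρπ' := ρ₀ ᵥ* (1 - γ • Pπ')⁻¹
    let ρπ := ρ₀ ᵥ* (1 - γ • Pπ)⁻¹
    let ρβ := ρ₀ ᵥ* (1 - γ • Pβ)⁻¹
    norm1 (ρπ' - (α • ρπ + (1 - α) • ρβ)) ≤
      γ / (1 - γ) ^ 2 * (α * normInfM (polπ' - polπ) + (1 - α) * normInfM (polπ' - polβ)) := by
  intro Pπ' Pπ Pβ ρπ' ρπ ρβ
  have hα0 := hα.1
  have hα1 : 0 ≤ 1 - α := by linarith [hα.2]
  have hSπ' := isStochastic_mul polπ' P hpolπ' hP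
  have hSπ := isStochastic_mul polπ P hpolπ hP
  have hSβ := isStochastic_mul polβ P hpolβ hP
  have hC : 0 ≤ γ / (1 - γ) ^ 2 := by
    have := hγ.1
    positivity
  have hdec : ρπ' - (α • ρπ + (1 - α) • ρβ) = α • (ρπ' - ρπ) + (1 - α) • (ρπ' - ρβ) := by
    funext i
    simp only [Pi.sub_apply, Pi.add_apply, Pi.smul_apply, smul_eq_mul]
    ring
  have hb1 : norm1 (ρπ' - ρπ) ≤ γ / (1 - γ) ^ 2 * normInfM (polπ' - polπ) := by
    refine (diff_bound γ hγ Pπ' Pπ hSπ' hSπ ρ₀ hρ₀pos hρ₀sum).trans ?_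
    refine mul_le_mul_of_nonneg_left ?_ hC
    have : Pπ' - Pπ = (polπ' - polπ) * P := (Matrix.sub_mul _ _ _).symm
    rw [this]
    exact normInf_mul_stoch_le _ _ hP
  have hb2 : norm1 (ρπ' - ρβ) ≤ γ / (1 - γ) ^ 2 * normInfM (polπ' - polβ) := by
    refine (diff_bound γ hγ Pπ' Pβ hSπ' hSβ ρ₀ hρ₀pos hρ₀sum).trans ?_
    refine mul_le_mul_of_nonneg_left ?_ hC
    have : Pπ' - Pβ = (polπ' - polβ) * P := (Matrix.sub_mul _ _ _).symm
    rw [this]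
    exact normInf_mul_stoch_le _ _ hP
  calc norm1 (ρπ' - (α • ρπ + (1 - α) • ρβ))
      = norm1 (α • (ρπ' - ρπ) + (1 - α) • (ρπ' - ρβ)) := by rw [hdec]
    _ ≤ α * norm1 (ρπ' - ρπ) + (1 - α) * norm1 (ρπ' - ρβ) :=
        norm1_convex_le α (1 - α) hα0 hα1 _ _
    _ ≤ α * (γ / (1 - γ) ^ 2 * normInfM (polπ' - polπ))
        + (1 - α) * (γ / (1 - γ) ^ 2 * normInfM (polπ' - polβ)) :=
        add_le_add (mul_le_mul_of_nonneg_left hb1 hα0) (mul_le_mul_of_nonneg_left hb2 hα1)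
    _ = γ / (1 - γ) ^ 2 * (α * normInfM (polπ' - polπ) + (1 - α) * normInfM (polπ' - polβ)) := by
        ring
end

section
/- Let S and A be nonempty finite types, γ ∈ (0,1), P a row-stochastic matrix of size |S×A|×|S|, r ∈ ℝ^{S×A}, and ρ₀ ∈ ℝ^S a vector with nonnegative entries summing to 1. For a policy π given by a row-stochastic matrix Π^π of size |S|×|S×A| define P^π = Π^πP, r^π = Π^πr, v^π = (I − γP^π)⁻¹r^π, q^π = r + γPv^π, η(π) = ρ₀ᵀv^π, and ρ^πᵀ = ρ₀ᵀ(I − γP^π)⁻¹; for policies π, π′ define Ā^π_{π'} = (Π^{π'} − Π^π)q^π, and define D_KL^max(π ‖ π′) = max over states s of Σⱼ Π^π(s,j) · log(Π^π(s,j)/Π^{π'}(s,j)) (with the convention that a term is 0 when Π^π(s,j) = 0). Let π, π′ be target policies and β a behavior policy, and assume every entry of Π^{π'} is strictly positive. Then for every α ∈ [0,1]: η(π′) − η(π) ≥ α ρ^πᵀ Ā^π_{π'} + (1−α) ρ^βᵀ Ā^π_{π'} − (2γ/(1−γ)²) · (α · D_KL^max(π ‖ π′) + (1−α) · (D_KL^max(π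 ‖ π′) · D_KL^max(β ‖ π′))^{1/2}) · ‖q^π‖∞. -/
open Matrix BigOperators

/-- `‖x‖∞`: the maximum absolute entry of a vector. -/
noncomputable def normInfV {n : Type*} [Fintype n] (x : n → ℝ) : ℝ :=
  ⨆ i, |x i|

/-- `D_KL^max(Π ‖ Π′)`: the maximum over rows `s` of `Σⱼ Π(s,j) log(Π(s,j)/Π′(s,j))`.
(When `Π(s,j) = 0` the term is `0 * log 0 = 0` by the convention `Real.log 0 = 0`,
matching the convention that such terms vanish.) -/
noncomputable def DKLmax {m n : Type*} [Fintype m] [Fintype n]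
    (M M' : Matrix m n ℝ) : ℝ :=
  ⨆ s, ∑ j, M s j * Real.log (M s j / M' s j)

/-! ### Pinsker's inequality (finite version) -/

section Pinsker

private noncomputable def gAux (t : ℝ) : ℝ := Real.log t - 3*(t-1)*(t+5)/(2*(t+2)^2)

private lemma gAux_hasDeriv {x : ℝ} (hx : 0 < x) :
    HasDerivAt gAux (x⁻¹ - 27/(x+2)^3) x := by
  have hne : (2*(x+2)^2 : ℝ) ≠ 0 := by positivity
  have hu : HasDerivAt (fun t : ℝ => 3*(t-1)*(t+5)) (3*((x-1)+(x+5))) x := by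
    have h1 : HasDerivAt (fun t : ℝ => t - 1) 1 x := (hasDerivAt_id x).sub_const 1
    have h2 : HasDerivAt (fun t : ℝ => t + 5) 1 x := (hasDerivAt_id x).add_const 5
    have h3 := (h1.mul h2).const_mul (3 : ℝ)
    convert h3 using 1
    · rfl
    · rfl
    · ext t; simp only [Pi.mul_apply]; ring
    · ring
  have hsq : HasDerivAt (fun t : ℝ => (t+2)^2) (2*(x+2)) x := by
    have h3 := ((hasDerivAt_id x).add_const 2).pow 2
    convert h3 using 1
    · rfl
    · rfl
    · ext t; simp
    · simp
  have hv : HasDerivAt (fun t : ℝ => 2*(t+2)^2) (2*(2*(x+2))) x := hsq.const_mul 2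
  have hdiv := hu.div hv hne
  have hlog := Real.hasDerivAt_log (ne_of_gt hx)
  have := hlog.sub hdiv
  convert this using 1
  · rfl
  · rfl
  · rfl
  rw [eq_comm]
  field_simp
  ring

private lemma gAux_deriv_nonneg {x : ℝ} (hx : 0 < x) : 0 ≤ x⁻¹ - 27/(x+2)^3 := by
  rw [sub_nonneg, div_le_iff₀ (by positivity)]
  rw [inv_mul_eq_div, le_div_iff₀ hx]
  nlinarith [sq_nonneg (x-1), hx.le]

private lemma gAux_one : gAux 1 = 0 := by simp [gAux]

private lemma gAux_mono : MonotoneOn gAux (Set.Ioi (0:ℝ)) := by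
  apply monotoneOn_of_deriv_nonneg (convex_Ioi 0)
  · exact fun x hx => ((gAux_hasDeriv hx).continuousAt).continuousWithinAt
  · intro x hx
    rw [interior_Ioi] at hx
    exact ((gAux_hasDeriv hx).differentiableAt).differentiableWithinAt
  · intro x hx
    rw [interior_Ioi] at hx
    rw [(gAux_hasDeriv hx).deriv]
    exact gAux_deriv_nonneg hx

private noncomputable def fAux (t : ℝ) : ℝ := t * Real.log t + 1 - t - 3*(t-1)^2/(2*(t+2))

private lemma fAux_hasDeriv {x : ℝ} (hx : 0 < x) : HasDerivAt fAux (gAux x) x := by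
  have hne : (2*(x+2) : ℝ) ≠ 0 := by positivity
  have h1 : HasDerivAt (fun t : ℝ => t * Real.log t) (Real.log x + 1) x :=
    Real.hasDerivAt_mul_log (ne_of_gt hx)
  have hu : HasDerivAt (fun t : ℝ => 3*(t-1)^2) (3*(2*(x-1))) x := by
    have h3 := (((hasDerivAt_id x).sub_const 1).pow 2).const_mul (3:ℝ)
    convert h3 using 1
    · rfl
    · rfl
    · ext t; simp
    · simp
  have hv : HasDerivAt (fun t : ℝ => 2*(t+2)) 2 x := by
    have h3 := ((hasDerivAt_id x).add_const 2).const_mul (2:ℝ)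
    convert h3 using 1
    · rfl
    · rfl
    · ext t; simp
    · norm_num
  have hdiv := hu.div hv hne
  have H : HasDerivAt fAux ((Real.log x + 1) - 1 -
      (3*(2*(x-1)) * (2*(x+2)) - 3*(x-1)^2 * 2)/(2*(x+2))^2) x :=
    ((h1.add_const 1).sub (hasDerivAt_id x)).sub hdiv
  convert H using 1
  rw [gAux, eq_comm]
  have hne2 : ((x:ℝ)+2) ≠ 0 := by positivity
  field_simp
  ring

private lemma fAux_one : fAux 1 = 0 := by norm_num [fAux]

private lemma fAux_nonneg {t : ℝ} (ht : 0 < t) : 0 ≤ fAux t := by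
  rcases le_total t 1 with h | h
  · have hanti : AntitoneOn fAux (Set.Ioc (0:ℝ) 1) := by
      apply antitoneOn_of_deriv_nonpos (convex_Ioc 0 1)
      · exact fun x hx => ((fAux_hasDeriv hx.1).continuousAt).continuousWithinAt
      · intro x hx
        rw [interior_Ioc] at hx
        exact ((fAux_hasDeriv hx.1).differentiableAt).differentiableWithinAt
      · intro x hx
        rw [interior_Ioc] at hx
        rw [(fAux_hasDeriv hx.1).deriv]
        have := gAux_mono (Set.mem_Ioi.mpr hx.1) (Set.mem_Ioi.mpr one_pos) hx.2.le
        rw [gAux_one] at this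
        exact this
    have := hanti (Set.mem_Ioc.mpr ⟨ht, h⟩) (Set.mem_Ioc.mpr ⟨one_pos, le_refl 1⟩) h
    rw [fAux_one] at this
    exact this
  · have hmono : MonotoneOn fAux (Set.Ici (1:ℝ)) := by
      apply monotoneOn_of_deriv_nonneg (convex_Ici 1)
      · exact fun x hx => ((fAux_hasDeriv (lt_of_lt_of_le one_pos hx)).continuousAt).continuousWithinAt
      · intro x hx
        rw [interior_Ici] at hx
        exact ((fAux_hasDeriv (lt_trans one_pos hx)).differentiableAt).differentiableWithinAt
      · intro x hx
        rw [interior_Ici] at hx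
        rw [(fAux_hasDeriv (lt_trans one_pos hx)).deriv]
        have := gAux_mono (Set.mem_Ioi.mpr one_pos) (Set.mem_Ioi.mpr (lt_trans one_pos hx)) hx.le
        rw [gAux_one] at this
        exact this
    have := hmono (Set.mem_Ici.mpr (le_refl 1)) (Set.mem_Ici.mpr h) h
    rw [fAux_one] at this
    exact this

/-- Pointwise bound: `3(p-q)²/(2(p+2q)) ≤ p log(p/q) + q - p`. -/
private lemma pointwise_kl {p q : ℝ} (hp : 0 ≤ p) (hq : 0 < q) :
    3*(p-q)^2/(2*(p+2*q)) ≤ p * Real.log (p/q) + q - p := by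
  rcases eq_or_lt_of_le hp with h0 | hp
  · rw [← h0]
    rw [show (0:ℝ)-q = -q by ring]
    rw [show (0:ℝ)+2*q = 2*q by ring]
    have : 3*(-q)^2/(2*(2*q)) = 3*q/4 := by field_simp; ring
    rw [this]
    linarith
  · have ht : 0 < p/q := div_pos hp hq
    have hf := fAux_nonneg ht
    rw [fAux] at hf
    have hqne : q ≠ 0 := ne_of_gt hq
    have key : p * Real.log (p/q) + q - p - 3*(p-q)^2/(2*(p+2*q)) =
        q * ((p/q) * Real.log (p/q) + 1 - (p/q) - 3*((p/q)-1)^2/(2*((p/q)+2))) := by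
      have hd : (2*((p/q)+2)) ≠ 0 := by positivity
      have hd2 : (2*(p+2*q)) ≠ 0 := by positivity
      field_simp
    nlinarith [mul_nonneg hq.le hf]

/-- **Pinsker's inequality** (finite version). -/
lemma pinsker_finite {n : Type*} [Fintype n] (p q : n → ℝ)
    (hp : ∀ j, 0 ≤ p j) (hq : ∀ j, 0 < q j)
    (hps : ∑ j, p j = 1) (hqs : ∑ j, q j = 1) :
    ∑ j, |p j - q j| ≤ Real.sqrt (2 * ∑ j, p j * Real.log (p j / q j)) := by
  set KL := ∑ j, p j * Real.log (p j / q j) with hKL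
  have hsum3 : ∑ j, (p j + 2 * q j) = 3 := by
    rw [Finset.sum_add_distrib, ← Finset.mul_sum, hps, hqs]; norm_num
  have hIneq : ∑ j, (p j - q j)^2 / (p j + 2*q j) ≤ (2/3) * KL := by
    have h1 : ∑ j, 3*(p j - q j)^2/(2*(p j + 2*q j)) ≤
        ∑ j, (p j * Real.log (p j / q j) + q j - p j) :=
      Finset.sum_le_sum fun j _ => pointwise_kl (hp j) (hq j)
    have h2 : ∑ j, (p j * Real.log (p j / q j) + q j - p j) = KL := by
      rw [hKL]
      rw [show (fun j => p j * Real.log (p j / q j) + q j - p j) =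
        (fun j => p j * Real.log (p j / q j) + (q j - p j)) from funext fun j => by ring]
      rw [Finset.sum_add_distrib, Finset.sum_sub_distrib, hps, hqs]
      ring
    have h3 : ∑ j, 3*(p j - q j)^2/(2*(p j + 2*q j)) =
        (3/2) * ∑ j, (p j - q j)^2 / (p j + 2*q j) := by
      rw [Finset.mul_sum]
      refine Finset.sum_congr rfl fun j _ => ?_
      have hb : (p j + 2 * q j) ≠ 0 := by nlinarith [hp j, hq j]
      field_simp
      try ring
    rw [h3, h2] at h1
    linarith
  have hCS : (∑ j, |p j - q j|)^2 / 3 ≤ ∑ j, (p j - q j)^2 / (p j + 2*q j) := by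
    have := Finset.sq_sum_div_le_sum_sq_div Finset.univ (fun j => |p j - q j|)
      (g := fun j => p j + 2 * q j)
      (fun j _ => by show (0:ℝ) < p j + 2 * q j; nlinarith [hp j, hq j])
    rw [hsum3] at this
    simpa [sq_abs] using this
  have habs : 0 ≤ ∑ j, |p j - q j| := Finset.sum_nonneg fun j _ => abs_nonneg _
  have h0 : 0 ≤ ∑ j, (p j - q j)^2 / (p j + 2*q j) :=
    Finset.sum_nonneg fun j _ => div_nonneg (sq_nonneg _) (by nlinarith [hp j, hq j])
  have hKLnn : 0 ≤ KL := by linarith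
  rw [Real.le_sqrt habs]
  · nlinarith
  · linarith

end Pinsker

/-! ### Matrix norm lemmas (ℓ∞ operator norm) -/

attribute [local instance]
  Matrix.linftyOpNormedAddCommGroup Matrix.linftyOpNormedRing Matrix.linftyOpNormedAlgebra

section MatrixNorm
variable {m n : Type*} [Fintype m] [Fintype n]

lemma norm_matrix_le_of_rows {c : ℝ} (M : Matrix m n ℝ) (hc : 0 ≤ c)
    (h : ∀ i, ∑ j, |M i j| ≤ c) : ‖M‖ ≤ c := by
  rw [Matrix.linfty_opNorm_def]
  have h2 : (Finset.univ.sup fun i => ∑ j : n, ‖M i j‖₊) ≤ (⟨c, hc⟩ : NNReal) :=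
    Finset.sup_le fun i _ => by
      apply NNReal.coe_le_coe.mp
      push_cast
      show _ ≤ c
      simpa [Real.norm_eq_abs] using h i
  exact_mod_cast h2

lemma norm_one_le_matrix [DecidableEq m] : ‖(1 : Matrix m m ℝ)‖ ≤ 1 := by
  apply norm_matrix_le_of_rows _ zero_le_one
  intro i
  rw [Finset.sum_eq_single i (fun b _ hb => by simp [Matrix.one_apply, (Ne.symm hb)]) (by simp)]
  simp [Matrix.one_apply]

lemma IsStochastic.norm_le {M : Matrix m n ℝ} (h : IsStochastic M) : ‖M‖ ≤ 1 := by
  apply norm_matrix_le_of_rows _ zero_le_one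
  intro i
  rw [← h.2 i]
  exact le_of_eq (Finset.sum_congr rfl fun j _ => abs_of_nonneg (h.1 i j))

lemma IsStochastic.mul {p : Type*} [Fintype p] {M : Matrix m n ℝ} {N : Matrix n p ℝ}
    (hM : IsStochastic M) (hN : IsStochastic N) : IsStochastic (M * N) := by
  constructor
  · intro i j
    exact Finset.sum_nonneg fun k _ => mul_nonneg (hM.1 i k) (hN.1 k j)
  · intro i
    simp only [Matrix.mul_apply]
    rw [Finset.sum_comm]
    calc ∑ k, ∑ j, M i k * N k j = ∑ k, M i k * ∑ j, N k j := by
          simp [Finset.mul_sum]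
      _ = 1 := by simp [hN.2, hM.2 i]

variable [DecidableEq m]

lemma inv_norm_le {γ : ℝ} (hγ0 : 0 < γ) (hγ1 : γ < 1) {Q : Matrix m m ℝ}
    (hQ : IsStochastic Q) : ‖(1 - γ • Q)⁻¹‖ ≤ (1 - γ)⁻¹ := by
  have hsm : ‖γ • Q‖ ≤ γ := by
    rw [norm_smul, Real.norm_eq_abs, abs_of_pos hγ0]
    nlinarith [hQ.norm_le]
  have hlt : ‖γ • Q‖ < 1 := lt_of_le_of_lt hsm hγ1
  rw [Matrix.nonsing_inv_eq_ringInverse, ← geom_series_eq_inverse _ hlt]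
  calc ‖∑' n : ℕ, (γ • Q) ^ n‖ ≤ ‖(1 : Matrix m m ℝ)‖ - 1 + (1 - ‖γ • Q‖)⁻¹ :=
        tsum_geometric_le_of_norm_lt_one _ hlt
    _ ≤ (1 - γ)⁻¹ := by
        have h1 : ‖(1 : Matrix m m ℝ)‖ ≤ 1 := norm_one_le_matrix
        have : (1 - ‖γ • Q‖)⁻¹ ≤ (1 - γ)⁻¹ := by
          apply inv_anti₀ (by linarith)
          linarith
        linarith

lemma isUnit_one_sub_smul {γ : ℝ} (hγ0 : 0 < γ) (hγ1 : γ < 1) {Q : Matrix m m ℝ}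
    (hQ : IsStochastic Q) : IsUnit (1 - γ • Q) := by
  apply isUnit_one_sub_of_norm_lt_one
  rw [norm_smul, Real.norm_eq_abs, abs_of_pos hγ0]
  nlinarith [hQ.norm_le, hQ.norm_le]

end MatrixNorm

section Core

variable {S : Type*} [Fintype S] [DecidableEq S]

/-- Resolvent difference bound. -/
lemma resolvent_diff_bound {γ : ℝ} (hγ0 : 0 < γ) (hγ1 : γ < 1)
    {Q1 Q2 : Matrix S S ℝ} (hQ1 : IsStochastic Q1) (hQ2 : IsStochastic Q2) :
    ‖(1 - γ • Q1)⁻¹ - (1 - γ • Q2)⁻¹‖ ≤ (1-γ)⁻¹ * (γ * ‖Q1 - Q2‖) * (1-γ)⁻¹ := by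
  set X1 := 1 - γ • Q1 with hX1
  set X2 := 1 - γ • Q2 with hX2
  have hU1 : IsUnit X1 := isUnit_one_sub_smul hγ0 hγ1 hQ1
  have hU2 : IsUnit X2 := isUnit_one_sub_smul hγ0 hγ1 hQ2
  have hd1 : IsUnit X1.det := (Matrix.isUnit_iff_isUnit_det X1).mp hU1
  have hd2 : IsUnit X2.det := (Matrix.isUnit_iff_isUnit_det X2).mp hU2
  have hdiff : X2 - X1 = γ • (Q1 - Q2) := by
    rw [hX1, hX2, smul_sub]
    abel
  have key : X1⁻¹ - X2⁻¹ = X1⁻¹ * (γ • (Q1 - Q2)) * X2⁻¹ := by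
    rw [← hdiff, mul_sub, Matrix.nonsing_inv_mul _ hd1, sub_mul, one_mul,
      Matrix.mul_assoc, Matrix.mul_nonsing_inv _ hd2, Matrix.mul_one]
  rw [key]
  have hn1 : ‖X1⁻¹‖ ≤ (1-γ)⁻¹ := inv_norm_le hγ0 hγ1 hQ1
  have hn2 : ‖X2⁻¹‖ ≤ (1-γ)⁻¹ := inv_norm_le hγ0 hγ1 hQ2
  have hsm : ‖γ • (Q1 - Q2)‖ = γ * ‖Q1 - Q2‖ := by
    rw [norm_smul, Real.norm_eq_abs, abs_of_pos hγ0]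
  calc ‖X1⁻¹ * (γ • (Q1 - Q2)) * X2⁻¹‖
      ≤ ‖X1⁻¹ * (γ • (Q1 - Q2))‖ * ‖X2⁻¹‖ := Matrix.linfty_opNorm_mul _ _
    _ ≤ (‖X1⁻¹‖ * ‖γ • (Q1 - Q2)‖) * ‖X2⁻¹‖ :=
        mul_le_mul_of_nonneg_right (Matrix.linfty_opNorm_mul _ _) (norm_nonneg _)
    _ = ‖X1⁻¹‖ * (γ * ‖Q1 - Q2‖) * ‖X2⁻¹‖ := by rw [hsm]
    _ ≤ (1-γ)⁻¹ * (γ * ‖Q1 - Q2‖) * (1-γ)⁻¹ := by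
        have hγnn : 0 ≤ γ * ‖Q1 - Q2‖ := mul_nonneg hγ0.le (norm_nonneg _)
        have h1 : ‖X1⁻¹‖ * (γ * ‖Q1 - Q2‖) ≤ (1-γ)⁻¹ * (γ * ‖Q1 - Q2‖) :=
          mul_le_mul_of_nonneg_right hn1 hγnn
        have h2 : ‖X1⁻¹‖ * (γ * ‖Q1 - Q2‖) * ‖X2⁻¹‖ ≤
            (1-γ)⁻¹ * (γ * ‖Q1 - Q2‖) * ‖X2⁻¹‖ :=
          mul_le_mul_of_nonneg_right h1 (norm_nonneg _)
        refine h2.trans (mul_le_mul_of_nonneg_left hn2 ?_)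
        have h7 : (0:ℝ) ≤ (1-γ)⁻¹ := inv_nonneg.mpr (by linarith)
        exact mul_nonneg h7 hγnn

/-- A convex combination against a probability vector is bounded by the sup norm. -/
lemma dist_dot_le {ρ : S → ℝ} (hρpos : ∀ s, 0 ≤ ρ s) (hρsum : ∑ s, ρ s = 1)
    (w : S → ℝ) : |ρ ⬝ᵥ w| ≤ ‖w‖ := by
  calc |ρ ⬝ᵥ w| ≤ ∑ s, |ρ s * w s| := Finset.abs_sum_le_sum_abs _ _
    _ = ∑ s, ρ s * |w s| := Finset.sum_congr rfl fun s _ => by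
        rw [abs_mul, abs_of_nonneg (hρpos s)]
    _ ≤ ∑ s, ρ s * ‖w‖ := Finset.sum_le_sum fun s _ =>
        mul_le_mul_of_nonneg_left (by simpa [Real.norm_eq_abs] using norm_le_pi_norm w s)
          (hρpos s)
    _ = ‖w‖ := by rw [← Finset.sum_mul, hρsum, one_mul]

end Core

section KLNorm

variable {m n : Type*} [Fintype m] [Fintype n]

lemma rowKL_le_DKLmax (M M' : Matrix m n ℝ) (s : m) :
    ∑ j, M s j * Real.log (M s j / M' s j) ≤ DKLmax M M' := by
  unfold DKLmax
  exact le_ciSup (f := fun s => ∑ j, M s j * Real.log (M s j / M' s j))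
    (Set.Finite.bddAbove (Set.finite_range _)) s

lemma rowKL_nonneg {p q : n → ℝ} (hp : ∀ j, 0 ≤ p j) (hq : ∀ j, 0 < q j)
    (hps : ∑ j, p j = 1) (hqs : ∑ j, q j = 1) :
    0 ≤ ∑ j, p j * Real.log (p j / q j) := by
  have h : ∀ j, p j - q j ≤ p j * Real.log (p j / q j) := by
    intro j
    rcases eq_or_lt_of_le (hp j) with h0 | hpj
    · rw [← h0]
      simp
      linarith [hq j]
    · have hlog : Real.log (q j / p j) ≤ q j / p j - 1 :=
        Real.log_le_sub_one_of_pos (div_pos (hq j) hpj)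
      have hinv : Real.log (p j / q j) = - Real.log (q j / p j) := by
        rw [← Real.log_inv]
        congr 1
        field_simp
      rw [hinv]
      have := mul_le_mul_of_nonneg_left hlog (hp j)
      have hpq : p j * (q j / p j - 1) = q j - p j := by
        field_simp
      nlinarith
  calc (0:ℝ) = ∑ j, (p j - q j) := by
        rw [Finset.sum_sub_distrib, hps, hqs]; ring
    _ ≤ ∑ j, p j * Real.log (p j / q j) := Finset.sum_le_sum fun j _ => h j

lemma DKLmax_nonneg [Nonempty m] {M M' : Matrix m n ℝ}
    (hM : IsStochastic M) (hM' : IsStochastic M') (hpos : ∀ s j, 0 < M' s j) :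
    0 ≤ DKLmax M M' := by
  obtain ⟨s⟩ := ‹Nonempty m›
  exact le_trans (rowKL_nonneg (hM.1 s) (hpos s) (hM.2 s) (hM'.2 s)) (rowKL_le_DKLmax M M' s)

/-- Row-wise Pinsker bound on the ℓ∞ operator norm of the difference of two
row-stochastic matrices. -/
lemma norm_sub_le_sqrt_dkl {M M' : Matrix m n ℝ}
    (hM : IsStochastic M) (hM' : IsStochastic M') (hpos : ∀ s j, 0 < M' s j) :
    ‖M' - M‖ ≤ Real.sqrt (2 * DKLmax M M') := by
  apply norm_matrix_le_of_rows _ (Real.sqrt_nonneg _)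
  intro i
  have h1 : ∑ j, |(M' - M) i j| = ∑ j, |M i j - M' i j| :=
    Finset.sum_congr rfl fun j _ => by
      rw [Matrix.sub_apply, abs_sub_comm]
  rw [h1]
  calc ∑ j, |M i j - M' i j|
      ≤ Real.sqrt (2 * ∑ j, M i j * Real.log (M i j / M' i j)) :=
        pinsker_finite _ _ (hM.1 i) (hpos i) (hM.2 i) (hM'.2 i)
    _ ≤ Real.sqrt (2 * DKLmax M M') := by
        apply Real.sqrt_le_sqrt
        have := rowKL_le_DKLmax M M' i
        linarith

end KLNorm

lemma normInfV_eq_norm {n : Type*} [Fintype n] [Nonempty n] (x : n → ℝ) :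
    normInfV x = ‖x‖ := by
  apply le_antisymm
  · apply ciSup_le
    intro i
    simpa [Real.norm_eq_abs] using norm_le_pi_norm x i
  · obtain ⟨i₀⟩ := ‹Nonempty n›
    have h1 : ∀ i, ‖x i‖ ≤ normInfV x := fun i => by
      simpa [Real.norm_eq_abs, normInfV] using
        le_ciSup (Set.Finite.bddAbove (Set.finite_range fun i => |x i|)) i
    have h0 : 0 ≤ normInfV x := le_trans (abs_nonneg (x i₀)) (by simpa using h1 i₀)
    exact pi_norm_le_iff_of_nonneg h0 |>.mpr h1

/-- Corollary 2. `polπ`, `polπ'`, `polβ` are the policy matrices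
`Π^π, Π^{π'}, Π^β`, with `Π^{π'}` entrywise positive:
`η(π′) − η(π) ≥ α ρ^πᵀ Ā^π_{π'} + (1−α) ρ^βᵀ Ā^π_{π'}
  − (2γ/(1−γ)²)(α D_KL^max(π‖π′) + (1−α) (D_KL^max(π‖π′) D_KL^max(β‖π′))^{1/2})‖q^π‖∞`. -/
theorem on_and_off_policy_improvement_with_KL
    {S A : Type*} [Fintype S] [Fintype A] [Nonempty S] [Nonempty A] [DecidableEq S]
    (γ : ℝ) (hγ : γ ∈ Set.Ioo (0 : ℝ) 1)
    (P : Matrix (S × A) S ℝ) (hP : IsStochastic P)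
    (r : S × A → ℝ)
    (ρ₀ : S → ℝ) (hρ₀pos : ∀ s, 0 ≤ ρ₀ s) (hρ₀sum : ∑ s, ρ₀ s = 1)
    (polπ polπ' polβ : Matrix S (S × A) ℝ)
    (hpolπ : IsStochastic polπ) (hpolπ' : IsStochastic polπ') (hpolβ : IsStochastic polβ)
    (hpolπ'pos : ∀ s j, 0 < polπ' s j)
    (α : ℝ) (hα : α ∈ Set.Icc (0 : ℝ) 1) :
    let Pπ := polπ * P
    let Pπ' := polπ' * P
    let Pβ := polβ * P
    let vπ := (1 - γ • Pπ)⁻¹ *ᵥ (polπ *ᵥ r)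
    let vπ' := (1 - γ • Pπ')⁻¹ *ᵥ (polπ' *ᵥ r)
    let qπ := r + γ • (P *ᵥ vπ)
    let Abar := (polπ' - polπ) *ᵥ qπ
    let ρπ := ρ₀ ᵥ* (1 - γ • Pπ)⁻¹
    let ρβ := ρ₀ ᵥ* (1 - γ • Pβ)⁻¹
    ρ₀ ⬝ᵥ vπ' - ρ₀ ⬝ᵥ vπ ≥
      α * (ρπ ⬝ᵥ Abar) + (1 - α) * (ρβ ⬝ᵥ Abar) -
        2 * γ / (1 - γ) ^ 2 *
          (α * DKLmax polπ polπ' +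
            (1 - α) * Real.sqrt (DKLmax polπ polπ' * DKLmax polβ polπ')) *
          normInfV qπ := by
  obtain ⟨hγ0, hγ1⟩ := hγ
  obtain ⟨hα0, hα1⟩ := hα
  intro Pπ Pπ' Pβ vπ vπ' qπ Abar ρπ ρβ
  have hPπ : IsStochastic Pπ := hpolπ.mul hP
  have hPπ' : IsStochastic Pπ' := hpolπ'.mul hP
  have hPβ : IsStochastic Pβ := hpolβ.mul hP
  set Xπ := 1 - γ • Pπ with hXπdef
  set Xπ' := 1 - γ • Pπ' with hXπ'def
  set Xβ := 1 - γ • Pβ with hXβdef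
  have hdπ : IsUnit Xπ.det :=
    (Matrix.isUnit_iff_isUnit_det _).mp (isUnit_one_sub_smul hγ0 hγ1 hPπ)
  have hdπ' : IsUnit Xπ'.det :=
    (Matrix.isUnit_iff_isUnit_det _).mp (isUnit_one_sub_smul hγ0 hγ1 hPπ')
  have hdβ : IsUnit Xβ.det :=
    (Matrix.isUnit_iff_isUnit_det _).mp (isUnit_one_sub_smul hγ0 hγ1 hPβ)
  -- The central identity: vπ' - vπ = Xπ'⁻¹ *ᵥ Abar
  have hXv : Xπ' *ᵥ (vπ' - vπ) = Abar := by
    have hvπ' : Xπ' *ᵥ vπ' = polπ' *ᵥ r := by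
      show Xπ' *ᵥ (Xπ'⁻¹ *ᵥ (polπ' *ᵥ r)) = polπ' *ᵥ r
      rw [Matrix.mulVec_mulVec, Matrix.mul_nonsing_inv _ hdπ', Matrix.one_mulVec]
    have hvπeq : Xπ *ᵥ vπ = polπ *ᵥ r := by
      show Xπ *ᵥ (Xπ⁻¹ *ᵥ (polπ *ᵥ r)) = polπ *ᵥ r
      rw [Matrix.mulVec_mulVec, Matrix.mul_nonsing_inv _ hdπ, Matrix.one_mulVec]
    have hrπ : polπ *ᵥ r = vπ - γ • (Pπ *ᵥ vπ) := by
      rw [← hvπeq, hXπdef, Matrix.sub_mulVec, Matrix.one_mulVec, Matrix.smul_mulVec]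
    have hπq : polπ *ᵥ qπ = vπ := by
      show polπ *ᵥ (r + γ • (P *ᵥ vπ)) = vπ
      rw [Matrix.mulVec_add, Matrix.mulVec_smul, Matrix.mulVec_mulVec, hrπ]
      show (vπ - γ • (Pπ *ᵥ vπ)) + γ • (Pπ *ᵥ vπ) = vπ
      abel
    have hπ'q : polπ' *ᵥ qπ = polπ' *ᵥ r + γ • (Pπ' *ᵥ vπ) := by
      show polπ' *ᵥ (r + γ • (P *ᵥ vπ)) = _
      rw [Matrix.mulVec_add, Matrix.mulVec_smul, Matrix.mulVec_mulVec]
    have hAbar : Abar = polπ' *ᵥ qπ - polπ *ᵥ qπ := Matrix.sub_mulVec _ _ _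
    rw [Matrix.mulVec_sub, hvπ', hAbar, hπq, hπ'q]
    rw [hXπ'def, Matrix.sub_mulVec, Matrix.one_mulVec, Matrix.smul_mulVec]
    abel
  have hkey : vπ' - vπ = Xπ'⁻¹ *ᵥ Abar := by
    rw [← hXv, Matrix.mulVec_mulVec, Matrix.nonsing_inv_mul _ hdπ', Matrix.one_mulVec]
  have hLHS : ρ₀ ⬝ᵥ vπ' - ρ₀ ⬝ᵥ vπ = ρ₀ ⬝ᵥ (Xπ'⁻¹ *ᵥ Abar) := by
    rw [← hkey, dotProduct_sub]
  have hρπ : ρπ ⬝ᵥ Abar = ρ₀ ⬝ᵥ (Xπ⁻¹ *ᵥ Abar) := (Matrix.dotProduct_mulVec _ _ _).symm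
  have hρβ : ρβ ⬝ᵥ Abar = ρ₀ ⬝ᵥ (Xβ⁻¹ *ᵥ Abar) := (Matrix.dotProduct_mulVec _ _ _).symm
  -- Norm bounds
  set Dπ := DKLmax polπ polπ' with hDπdef
  set Dβ := DKLmax polβ polπ' with hDβdef
  have hDπ0 : 0 ≤ Dπ := DKLmax_nonneg hpolπ hpolπ' hpolπ'pos
  have hDβ0 : 0 ≤ Dβ := DKLmax_nonneg hpolβ hpolπ' hpolπ'pos
  have hΔπ : ‖polπ' - polπ‖ ≤ Real.sqrt (2 * Dπ) := norm_sub_le_sqrt_dkl hpolπ hpolπ' hpolπ'pos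
  have hΔβ : ‖polπ' - polβ‖ ≤ Real.sqrt (2 * Dβ) := norm_sub_le_sqrt_dkl hpolβ hpolπ' hpolπ'pos
  have hq : normInfV qπ = ‖qπ‖ := normInfV_eq_norm qπ
  have hAbarn : ‖Abar‖ ≤ Real.sqrt (2 * Dπ) * ‖qπ‖ := by
    calc ‖Abar‖ = ‖(polπ' - polπ) *ᵥ qπ‖ := rfl
      _ ≤ ‖polπ' - polπ‖ * ‖qπ‖ := Matrix.linfty_opNorm_mulVec _ _
      _ ≤ Real.sqrt (2 * Dπ) * ‖qπ‖ := mul_le_mul_of_nonneg_right hΔπ (norm_nonneg _)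
  -- general branch bound
  have branch : ∀ (pol2 : Matrix S (S × A) ℝ), IsStochastic pol2 →
      ∀ (X2 : Matrix S S ℝ), X2 = 1 - γ • (pol2 * P) →
      |ρ₀ ⬝ᵥ (Xπ'⁻¹ *ᵥ Abar) - ρ₀ ⬝ᵥ (X2⁻¹ *ᵥ Abar)| ≤
        (1-γ)⁻¹ * (γ * ‖polπ' - pol2‖) * (1-γ)⁻¹ * ‖Abar‖ := by
    intro pol2 hpol2 X2 hX2
    have hQ2 : IsStochastic (pol2 * P) := hpol2.mul hP
    have hd : ρ₀ ⬝ᵥ (Xπ'⁻¹ *ᵥ Abar) - ρ₀ ⬝ᵥ (X2⁻¹ *ᵥ Abar) =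
        ρ₀ ⬝ᵥ ((Xπ'⁻¹ - X2⁻¹) *ᵥ Abar) := by
      rw [Matrix.sub_mulVec, dotProduct_sub]
    rw [hd]
    have h1 : |ρ₀ ⬝ᵥ ((Xπ'⁻¹ - X2⁻¹) *ᵥ Abar)| ≤ ‖(Xπ'⁻¹ - X2⁻¹) *ᵥ Abar‖ :=
      dist_dot_le hρ₀pos hρ₀sum _
    have h2 : ‖(Xπ'⁻¹ - X2⁻¹) *ᵥ Abar‖ ≤ ‖Xπ'⁻¹ - X2⁻¹‖ * ‖Abar‖ :=
      Matrix.linfty_opNorm_mulVec _ _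
    have h3 : ‖Xπ'⁻¹ - X2⁻¹‖ ≤ (1-γ)⁻¹ * (γ * ‖Pπ' - pol2 * P‖) * (1-γ)⁻¹ := by
      rw [hXπ'def, hX2]
      exact resolvent_diff_bound hγ0 hγ1 hPπ' hQ2
    have h4 : ‖Pπ' - pol2 * P‖ ≤ ‖polπ' - pol2‖ := by
      have : Pπ' - pol2 * P = (polπ' - pol2) * P := (Matrix.sub_mul _ _ _).symm
      rw [this]
      calc ‖(polπ' - pol2) * P‖ ≤ ‖polπ' - pol2‖ * ‖P‖ := Matrix.linfty_opNorm_mul _ _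
        _ ≤ ‖polπ' - pol2‖ * 1 := mul_le_mul_of_nonneg_left hP.norm_le (norm_nonneg _)
        _ = ‖polπ' - pol2‖ := mul_one _
    have hc : (0:ℝ) < (1-γ)⁻¹ := inv_pos.mpr (by linarith)
    calc |ρ₀ ⬝ᵥ ((Xπ'⁻¹ - X2⁻¹) *ᵥ Abar)| ≤ ‖Xπ'⁻¹ - X2⁻¹‖ * ‖Abar‖ := h1.trans h2
      _ ≤ (1-γ)⁻¹ * (γ * ‖Pπ' - pol2 * P‖) * (1-γ)⁻¹ * ‖Abar‖ :=
          mul_le_mul_of_nonneg_right h3 (norm_nonneg _)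
      _ ≤ (1-γ)⁻¹ * (γ * ‖polπ' - pol2‖) * (1-γ)⁻¹ * ‖Abar‖ := by
          have := mul_le_mul_of_nonneg_left h4 hγ0.le
          have h5 : (1-γ)⁻¹ * (γ * ‖Pπ' - pol2 * P‖) * (1-γ)⁻¹ ≤
              (1-γ)⁻¹ * (γ * ‖polπ' - pol2‖) * (1-γ)⁻¹ := by
            apply mul_le_mul_of_nonneg_right _ hc.le
            exact mul_le_mul_of_nonneg_left this hc.le
          exact mul_le_mul_of_nonneg_right h5 (norm_nonneg _)
  -- π branch
  have hbπ : ρ₀ ⬝ᵥ (Xπ'⁻¹ *ᵥ Abar) ≥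
      ρ₀ ⬝ᵥ (Xπ⁻¹ *ᵥ Abar) - 2 * γ / (1 - γ) ^ 2 * Dπ * ‖qπ‖ := by
    have hb := branch polπ hpolπ Xπ hXπdef
    have hbound : (1-γ)⁻¹ * (γ * ‖polπ' - polπ‖) * (1-γ)⁻¹ * ‖Abar‖ ≤
        2 * γ / (1 - γ) ^ 2 * Dπ * ‖qπ‖ := by
      have hs2 : Real.sqrt (2*Dπ) * Real.sqrt (2*Dπ) = 2*Dπ :=
        Real.mul_self_sqrt (by linarith)
      have hA' : ‖polπ' - polπ‖ * ‖Abar‖ ≤ 2 * Dπ * ‖qπ‖ := by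
        calc ‖polπ' - polπ‖ * ‖Abar‖
            ≤ Real.sqrt (2*Dπ) * (Real.sqrt (2*Dπ) * ‖qπ‖) := by
              apply mul_le_mul hΔπ hAbarn (norm_nonneg _) (Real.sqrt_nonneg _)
          _ = 2 * Dπ * ‖qπ‖ := by rw [← mul_assoc, hs2]
      have hCnn : (0:ℝ) < (1-γ)⁻¹ := inv_pos.mpr (by linarith)
      have hrw : (1-γ)⁻¹ * (γ * ‖polπ' - polπ‖) * (1-γ)⁻¹ * ‖Abar‖ =
          γ * (1-γ)⁻¹ * (1-γ)⁻¹ * (‖polπ' - polπ‖ * ‖Abar‖) := by ring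
      have hrw2 : 2 * γ / (1 - γ) ^ 2 * Dπ * ‖qπ‖ =
          γ * (1-γ)⁻¹ * (1-γ)⁻¹ * (2 * Dπ * ‖qπ‖) := by
        field_simp
      rw [hrw, hrw2]
      apply mul_le_mul_of_nonneg_left hA'
      have h7 : (0:ℝ) ≤ (1-γ)⁻¹ := inv_nonneg.mpr (by linarith)
      exact mul_nonneg (mul_nonneg hγ0.le h7) h7
    have := abs_sub_abs_le_abs_sub (ρ₀ ⬝ᵥ (Xπ'⁻¹ *ᵥ Abar)) (ρ₀ ⬝ᵥ (Xπ⁻¹ *ᵥ Abar))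
    have h6 := neg_abs_le (ρ₀ ⬝ᵥ (Xπ'⁻¹ *ᵥ Abar) - ρ₀ ⬝ᵥ (Xπ⁻¹ *ᵥ Abar))
    linarith [hb.trans hbound]
  -- β branch
  have hbβ : ρ₀ ⬝ᵥ (Xπ'⁻¹ *ᵥ Abar) ≥
      ρ₀ ⬝ᵥ (Xβ⁻¹ *ᵥ Abar) - 2 * γ / (1 - γ) ^ 2 * Real.sqrt (Dπ * Dβ) * ‖qπ‖ := by
    have hb := branch polβ hpolβ Xβ hXβdef
    have hbound : (1-γ)⁻¹ * (γ * ‖polπ' - polβ‖) * (1-γ)⁻¹ * ‖Abar‖ ≤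
        2 * γ / (1 - γ) ^ 2 * Real.sqrt (Dπ * Dβ) * ‖qπ‖ := by
      have hs2 : Real.sqrt (2*Dβ) * Real.sqrt (2*Dπ) = 2 * Real.sqrt (Dπ * Dβ) := by
        rw [← Real.sqrt_mul (by linarith) (2*Dπ)]
        rw [show (2*Dβ) * (2*Dπ) = 4 * (Dπ * Dβ) by ring]
        rw [show (4:ℝ) * (Dπ * Dβ) = 2^2 * (Dπ * Dβ) by norm_num]
        rw [Real.sqrt_mul (by positivity) (Dπ * Dβ)]
        rw [Real.sqrt_sq (by norm_num : (0:ℝ) ≤ 2)]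
      have hA' : ‖polπ' - polβ‖ * ‖Abar‖ ≤ 2 * Real.sqrt (Dπ * Dβ) * ‖qπ‖ := by
        calc ‖polπ' - polβ‖ * ‖Abar‖
            ≤ Real.sqrt (2*Dβ) * (Real.sqrt (2*Dπ) * ‖qπ‖) :=
              mul_le_mul hΔβ hAbarn (norm_nonneg _) (Real.sqrt_nonneg _)
          _ = 2 * Real.sqrt (Dπ * Dβ) * ‖qπ‖ := by rw [← mul_assoc, hs2]
      have hrw : (1-γ)⁻¹ * (γ * ‖polπ' - polβ‖) * (1-γ)⁻¹ * ‖Abar‖ =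
          γ * (1-γ)⁻¹ * (1-γ)⁻¹ * (‖polπ' - polβ‖ * ‖Abar‖) := by ring
      have hrw2 : 2 * γ / (1 - γ) ^ 2 * Real.sqrt (Dπ * Dβ) * ‖qπ‖ =
          γ * (1-γ)⁻¹ * (1-γ)⁻¹ * (2 * Real.sqrt (Dπ * Dβ) * ‖qπ‖) := by
        field_simp
      rw [hrw, hrw2]
      apply mul_le_mul_of_nonneg_left hA'
      have h7 : (0:ℝ) ≤ (1-γ)⁻¹ := inv_nonneg.mpr (by linarith)
      exact mul_nonneg (mul_nonneg hγ0.le h7) h7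
    have h6 := neg_abs_le (ρ₀ ⬝ᵥ (Xπ'⁻¹ *ᵥ Abar) - ρ₀ ⬝ᵥ (Xβ⁻¹ *ᵥ Abar))
    linarith [hb.trans hbound]
  -- combine
  rw [hLHS, hρπ, hρβ, hq]
  set T' := ρ₀ ⬝ᵥ (Xπ'⁻¹ *ᵥ Abar)
  set Tπ := ρ₀ ⬝ᵥ (Xπ⁻¹ *ᵥ Abar)
  set Tβ := ρ₀ ⬝ᵥ (Xβ⁻¹ *ᵥ Abar)
  set N := ‖qπ‖
  set K := 2 * γ / (1 - γ) ^ 2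
  set s := Real.sqrt (Dπ * Dβ)
  have e1 : α * (Tπ - K * Dπ * N) ≤ α * T' := mul_le_mul_of_nonneg_left hbπ hα0
  have e2 : (1 - α) * (Tβ - K * s * N) ≤ (1 - α) * T' :=
    mul_le_mul_of_nonneg_left hbβ (by linarith)
  have hT : T' = α * T' + (1 - α) * T' := by ring
  nlinarith [e1, e2]
end
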